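/- Fix n : ℕ with n ≥ 1 and j : Fin n. Write s₁ : Fin (n+1) → Fin n for the codegeneracy with pivot j, s₂ : Fin (n+2) → Fin (n+1) for the codegeneracy whose pivot has value (j : ℕ), and s₃ : Fin (n+2) → Fin (n+1) for the codegeneracy whose pivot has value (j : ℕ) + 1; write d_⊤ : Fin m → Fin (m+1) for x ↦ (x : ℕ) and d_⊥ : Fin m → Fin (m+1) for x ↦ (x : ℕ) + 1. Then: (i) s₂ ∘ d_⊤ = d_⊤ ∘ s₁, and for every c : ℕ and monotone u : Fin c → Fin (n+2), v : Fin c → Fin n with s₂ ∘ u = d_⊤ ∘ v there exists a unique monotone w : Fin c → Fin (n+1) with d_⊤ ∘ w = u and s₁ ∘ w = v; (ii) s₃ ∘ d_⊥ = d_⊥ ∘ s₁, and for every c : ℕ and monotone u : Fin c → Fin (n+2), v : Fin c → Fin n with s₃ ∘ u = d_⊥ ∘ v there exists a unique monotone w : Fin c → Fin (n+1) with d_⊥ ∘ w = u and s₁ ∘ w = v. (The squares of a codegeneracy against each outer coface are pullbacks in the category of finite ordinals.) -/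

import Mathlib

/-- The codegeneracy map `s^k : Fin (m+2) → Fin (m+1)` with pivot `k : Fin (m+1)`. -/
def codeg {m : ℕ} (k : Fin (m + 1)) (y : Fin (m + 2)) : Fin (m + 1) :=
  if h : (y : ℕ) ≤ (k : ℕ) then ⟨(y : ℕ), by have := k.isLt; omega⟩
  else ⟨(y : ℕ) - 1, by have := y.isLt; omega⟩

/-- The top outer coface `d_⊤ : Fin m → Fin (m+1)`, `x ↦ x`. -/
def dTop {m : ℕ} (x : Fin m) : Fin (m + 1) :=
  ⟨(x : ℕ), by have := x.isLt; omega⟩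

/-- The bottom outer coface `d_⊥ : Fin m → Fin (m+1)`, `x ↦ x + 1`. -/
def dBot {m : ℕ} (x : Fin m) : Fin (m + 1) :=
  ⟨(x : ℕ) + 1, by have := x.isLt; omega⟩

/-- The squares of a codegeneracy against each outer coface are pullbacks in
the category of finite ordinals and monotone maps.  (Here the `n` of the
informal statement, required to satisfy `n ≥ 1`, is written `n + 1`, and
`j : Fin (n + 1)`; so `s₁ = codeg j : Fin (n+2) → Fin (n+1)`,
`s₂ : Fin (n+3) → Fin (n+2)` has pivot of value `(j : ℕ)`, and
`s₃ : Fin (n+3) → Fin (n+2)` has pivot of value `(j : ℕ) + 1`.) -/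
theorem codeg_outer_coface_pullbacks (n : ℕ) (j : Fin (n + 1)) :
    ((codeg (⟨(j : ℕ), by have := j.isLt; omega⟩ : Fin (n + 2))) ∘
        (dTop : Fin (n + 2) → Fin (n + 3)) = dTop ∘ (codeg j)) ∧
    (∀ (c : ℕ) (u : Fin c → Fin (n + 3)) (v : Fin c → Fin (n + 1)),
      Monotone u → Monotone v →
      (codeg (⟨(j : ℕ), by have := j.isLt; omega⟩ : Fin (n + 2))) ∘ u = dTop ∘ v →
      ∃! w : Fin c → Fin (n + 2), Monotone w ∧ dTop ∘ w = u ∧ (codeg j) ∘ w = v) ∧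
    ((codeg (⟨(j : ℕ) + 1, by have := j.isLt; omega⟩ : Fin (n + 2))) ∘
        (dBot : Fin (n + 2) → Fin (n + 3)) = dBot ∘ (codeg j)) ∧
    (∀ (c : ℕ) (u : Fin c → Fin (n + 3)) (v : Fin c → Fin (n + 1)),
      Monotone u → Monotone v →
      (codeg (⟨(j : ℕ) + 1, by have := j.isLt; omega⟩ : Fin (n + 2))) ∘ u = dBot ∘ v →
      ∃! w : Fin c → Fin (n + 2), Monotone w ∧ dBot ∘ w = u ∧ (codeg j) ∘ w = v) := by

  have cval : ∀ (m : ℕ) (k : Fin (m+1)) (y : Fin (m+2)),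
      ((codeg k y : Fin (m+1)) : ℕ) = if (y:ℕ) ≤ (k:ℕ) then (y:ℕ) else (y:ℕ) - 1 := by
    intro m k y
    unfold codeg
    split <;> simp_all
  refine ⟨?_, ?_, ?_, ?_⟩
  · funext x
    apply Fin.ext
    simp only [Function.comp_apply, dTop, cval]
  · intro c u v hu hv hc
    have hcx : ∀ x, ((codeg (⟨(j : ℕ), by have := j.isLt; omega⟩ : Fin (n + 2))) (u x) : ℕ)
        = (v x : ℕ) := by
      intro x
      have := congrFun hc x
      simpa [dTop] using congrArg Fin.val this
    have hult : ∀ x, (u x : ℕ) < n + 2 := by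
      intro x
      have h := hcx x
      rw [cval] at h
      have := (v x).isLt
      have := (u x).isLt
      have := j.isLt
      split at h <;> omega
    refine ⟨fun x => ⟨(u x : ℕ), hult x⟩, ⟨?_, ?_, ?_⟩, ?_⟩
    · intro a b hab
      exact hu hab
    · funext x; apply Fin.ext; simp [dTop]
    · funext x
      apply Fin.ext
      have h := hcx x
      rw [cval] at h
      simp only [Function.comp_apply, cval]
      split at h <;> [skip; skip] <;> split <;> simp_all <;> omega
    · intro w ⟨_, hw1, _⟩
      funext x
      apply Fin.ext
      have := congrArg Fin.val (congrFun hw1 x)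
      simpa [dTop] using this
  · funext x
    apply Fin.ext
    simp only [Function.comp_apply, dBot, cval]
    split_ifs <;> omega
  · intro c u v hu hv hc
    have hcx : ∀ x, ((codeg (⟨(j : ℕ) + 1, by have := j.isLt; omega⟩ : Fin (n + 2))) (u x) : ℕ)
        = (v x : ℕ) + 1 := by
      intro x
      have := congrFun hc x
      simpa [dBot] using congrArg Fin.val this
    have hupos : ∀ x, 1 ≤ (u x : ℕ) := by
      intro x
      have h := hcx x
      rw [cval] at h
      split at h <;> omega
    refine ⟨fun x => ⟨(u x : ℕ) - 1, by have := (u x).isLt; omega⟩, ⟨?_, ?_, ?_⟩, ?_⟩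
    · intro a b hab
      have := hu hab
      simp only [Fin.mk_le_mk, Fin.le_def] at *
      omega
    · funext x
      apply Fin.ext
      simp only [Function.comp_apply, dBot]
      have := hupos x
      omega
    · funext x
      apply Fin.ext
      have h := hcx x
      rw [cval] at h
      simp only [Function.comp_apply, cval]
      have := hupos x
      split at h <;> split <;> simp_all <;> omega
    · intro w ⟨_, hw1, _⟩
      funext x
      apply Fin.ext
      have := congrArg Fin.val (congrFun hw1 x)
      simp only [Function.comp_apply, dBot] at this
      simp only [Fin.val_mk]
      omega
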